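/- Suppose n ≥ 2 and r ≥ 2, and fix m ∈ {1, …, n}. Let T_m = ∑_{l=1}^r S_l ρ_m(l). Then E[T_m⁴] ≤ (7/48 + r²/(36n²) + 1/(5n))·r⁶. -/

import Mathlib

open MeasureTheory Finset Real

noncomputable section

instance instMSPerm (r : ℕ) : MeasurableSpace (Equiv.Perm (Fin r)) := ⊤

/-- The joint law of `n` independent uniformly random permutations of `{1, …, r}`:
the uniform probability measure on the finite product space. -/
def friedmanMeasure (n r : ℕ) : Measure (Fin n → Equiv.Perm (Fin r)) :=
  (PMF.uniformOfFintype (Fin n → Equiv.Perm (Fin r))).toMeasure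

/-- `ρ_i(j) = π_i(j) - (r+1)/2`, where `π_i(j) ∈ {1, …, r}` is the rank assigned by the
`i`-th permutation to treatment `j` (a permutation of `Fin r` assigns values in `{0, …, r-1}`,
hence the `+ 1`). -/
def rho (n r : ℕ) (i : Fin n) (j : Fin r) (ω : Fin n → Equiv.Perm (Fin r)) : ℝ :=
  ((ω i j : ℕ) : ℝ) + 1 - ((r : ℝ) + 1) / 2

/-- `S_j = (√12/√(r(r+1)n)) ∑_{i=1}^n ρ_i(j)`. -/
def Sstat (n r : ℕ) (j : Fin r) (ω : Fin n → Equiv.Perm (Fin r)) : ℝ :=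
  Real.sqrt 12 / Real.sqrt ((r : ℝ) * ((r : ℝ) + 1) * (n : ℝ)) * ∑ i, rho n r i j ω

/-- Friedman's statistic `F_r = ∑_{j=1}^r S_j²`. -/
def friedman (n r : ℕ) (ω : Fin n → Equiv.Perm (Fin r)) : ℝ :=
  ∑ j, (Sstat n r j ω) ^ 2

/-- The chi-square distribution with `p` degrees of freedom: the Gamma distribution
with shape `p/2` and rate `1/2`. -/
def chiSq (p : ℕ) : Measure ℝ := ProbabilityTheory.gammaMeasure ((p : ℝ) / 2) (1 / 2)

end


namespace TmAux



/-- centered rank function -/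
noncomputable def pr (r : ℕ) (k : Fin r) : ℝ := (k : ℝ) + 1 - ((r : ℝ) + 1) / 2

noncomputable def vr (r : ℕ) : ℝ := ∑ k, (pr r k) ^ 2

lemma sum_range_cast (r : ℕ) : ∑ k ∈ Finset.range r, (k : ℝ) = r * (r - 1) / 2 := by
  induction r with
  | zero => simp
  | succ q ih => rw [Finset.sum_range_succ, ih]; push_cast; ring

lemma sum_range_sq_cast (r : ℕ) :
    ∑ k ∈ Finset.range r, (k : ℝ) ^ 2 = r * (r - 1) * (2 * r - 1) / 6 := by
  induction r with
  | zero => simp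
  | succ q ih => rw [Finset.sum_range_succ, ih]; push_cast; ring

lemma sum_pr (r : ℕ) : ∑ k, pr r k = 0 := by
  unfold pr
  rw [Fin.sum_univ_eq_sum_range (fun k => ((k : ℝ) + 1 - ((r : ℝ) + 1) / 2))]
  simp only [Finset.sum_sub_distrib, Finset.sum_add_distrib, Finset.sum_const,
    Finset.card_range, nsmul_eq_mul, sum_range_cast]
  ring

lemma vr_eq (r : ℕ) : vr r = r * ((r : ℝ) ^ 2 - 1) / 12 := by
  unfold vr pr
  rw [Fin.sum_univ_eq_sum_range (fun k => ((k : ℝ) + 1 - ((r : ℝ) + 1) / 2) ^ 2)]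
  have h : ∀ k : ℕ, ((k : ℝ) + 1 - ((r : ℝ) + 1) / 2) ^ 2
      = (k : ℝ) ^ 2 + (2 - ((r : ℝ) + 1)) * k + (1 - ((r : ℝ) + 1) / 2) ^ 2 := by
    intro k; ring
  simp only [h]
  rw [Finset.sum_add_distrib, Finset.sum_add_distrib, ← Finset.mul_sum,
    sum_range_cast, sum_range_sq_cast, Finset.sum_const, Finset.card_range, nsmul_eq_mul]
  ring

lemma vr_nonneg (r : ℕ) : 0 ≤ vr r := Finset.sum_nonneg fun _ _ => sq_nonneg _

lemma sum_pr_comp {r : ℕ} (σ : Equiv.Perm (Fin r)) : ∑ l, pr r (σ l) = 0 := by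
  rw [Equiv.sum_comp σ (pr r)]; exact sum_pr r

lemma sum_pr_sq_comp {r : ℕ} (σ : Equiv.Perm (Fin r)) : ∑ l, (pr r (σ l)) ^ 2 = vr r := by
  rw [Equiv.sum_comp σ (fun k => (pr r k) ^ 2)]; rfl

/-- the single-permutation statistic -/
noncomputable def Y (r : ℕ) (τ : Equiv.Perm (Fin r)) : ℝ := ∑ l, pr r (τ l) * pr r l

noncomputable def D (r : ℕ) (l l' : Fin r) : ℝ :=
  ∑ τ : Equiv.Perm (Fin r), pr r (τ l) * pr r (τ l')

lemma D_comp {r : ℕ} (g : Equiv.Perm (Fin r)) (l l' : Fin r) :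
    D r (g l) (g l') = D r l l' := by
  unfold D
  rw [← Equiv.sum_comp (Equiv.mulRight g)
    (fun τ : Equiv.Perm (Fin r) => pr r (τ l) * pr r (τ l'))]
  refine Finset.sum_congr rfl fun τ _ => ?_
  simp [Equiv.Perm.mul_apply]

lemma sum_perm_pr (r : ℕ) (l : Fin r) (hr : 2 ≤ r) :
    ∑ τ : Equiv.Perm (Fin r), pr r (τ l) = 0 := by
  have hconst : ∀ l' : Fin r, ∑ τ : Equiv.Perm (Fin r), pr r (τ l')
      = ∑ τ : Equiv.Perm (Fin r), pr r (τ l) := by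
    intro l'
    rw [← Equiv.sum_comp (Equiv.mulRight (Equiv.swap l l'))
      (fun τ : Equiv.Perm (Fin r) => pr r (τ l))]
    refine Finset.sum_congr rfl fun τ _ => ?_
    simp [Equiv.Perm.mul_apply]
  have htot : ∑ l' : Fin r, ∑ τ : Equiv.Perm (Fin r), pr r (τ l') = 0 := by
    rw [Finset.sum_comm]
    simp [sum_pr_comp]
  rw [Finset.sum_congr rfl (fun l' _ => hconst l'), Finset.sum_const,
    Finset.card_univ, Fintype.card_fin, nsmul_eq_mul] at htot
  have hr0 : (r : ℝ) ≠ 0 := by positivity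
  exact (mul_eq_zero.mp htot).resolve_left hr0

lemma D_diag (r : ℕ) (hr : 2 ≤ r) (l : Fin r) :
    D r l l = (Fintype.card (Equiv.Perm (Fin r)) : ℝ) * vr r / r := by
  have hconst : ∀ l' : Fin r, D r l' l' = D r l l := by
    intro l'
    have := D_comp (Equiv.swap l l') l l
    simpa [Equiv.swap_apply_left] using this
  have htot : ∑ l' : Fin r, D r l' l'
      = (Fintype.card (Equiv.Perm (Fin r)) : ℝ) * vr r := by
    unfold D
    rw [Finset.sum_comm]
    simp only [← sq]
    rw [Finset.sum_congr rfl (fun τ _ => sum_pr_sq_comp τ), Finset.sum_const,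
      Finset.card_univ, nsmul_eq_mul]
  rw [Finset.sum_congr rfl (fun l' _ => hconst l'), Finset.sum_const,
    Finset.card_univ, Fintype.card_fin, nsmul_eq_mul] at htot
  have hr0 : (r : ℝ) ≠ 0 := by positivity
  field_simp [htot.symm]
  linarith [htot]

lemma D_offdiag (r : ℕ) (hr : 2 ≤ r) {l l' : Fin r} (h : l' ≠ l) :
    D r l l' = -((Fintype.card (Equiv.Perm (Fin r)) : ℝ) * vr r / (r * (r - 1))) := by
  -- all off-diagonal entries in row l are equal
  have hconst : ∀ l'' : Fin r, l'' ≠ l → D r l l'' = D r l l' := by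
    intro l'' h''
    have := D_comp (Equiv.swap l' l'') l l'
    rw [Equiv.swap_apply_of_ne_of_ne (Ne.symm h) (Ne.symm h''), Equiv.swap_apply_left] at this
    exact this
  have hrow : ∑ l'' : Fin r, D r l l'' = 0 := by
    unfold D
    rw [Finset.sum_comm]
    have : ∀ τ : Equiv.Perm (Fin r), ∑ l'' : Fin r, pr r (τ l) * pr r (τ l'')
        = pr r (τ l) * ∑ l'', pr r (τ l'') := fun τ => by rw [Finset.mul_sum]
    simp only [this, sum_pr_comp, mul_zero, Finset.sum_const_zero]
  have hsplit : D r l l + ∑ l'' ∈ univ.erase l, D r l l'' = 0 := by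
    rw [Finset.add_sum_erase _ _ (Finset.mem_univ l)]; exact hrow
  have herase : ∑ l'' ∈ univ.erase l, D r l l'' = (r - 1 : ℝ) * D r l l' := by
    rw [Finset.sum_congr rfl (fun l'' hl'' => hconst l'' (Finset.ne_of_mem_erase hl''))]
    rw [Finset.sum_const, Finset.card_erase_of_mem (Finset.mem_univ l),
      Finset.card_univ, Fintype.card_fin, nsmul_eq_mul]
    congr 1
    have : (1:ℕ) ≤ r := le_trans one_le_two hr
    push_cast [Nat.cast_sub this]
    ring
  rw [D_diag r hr l, herase] at hsplit
  have hr0 : (r : ℝ) ≠ 0 := by positivity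
  have hr1 : (r : ℝ) - 1 ≠ 0 := by
    have : (2:ℝ) ≤ r := by exact_mod_cast hr
    nlinarith
  field_simp at hsplit ⊢
  linarith




lemma Y_sq_le (r : ℕ) (τ : Equiv.Perm (Fin r)) : (Y r τ) ^ 2 ≤ (vr r) ^ 2 := by
  have h := Finset.sum_mul_sq_le_sq_mul_sq Finset.univ (fun l => pr r (τ l)) (pr r)
  have h2 : (∑ l, (pr r l) ^ 2) = vr r := rfl
  rw [sum_pr_sq_comp τ, h2, ← sq] at h
  exact h

lemma abs_Y_le (r : ℕ) (τ : Equiv.Perm (Fin r)) : |Y r τ| ≤ vr r := by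
  nlinarith [Y_sq_le r τ, sq_abs (Y r τ), abs_nonneg (Y r τ), vr_nonneg r]

lemma sum_Y (r : ℕ) (hr : 2 ≤ r) : ∑ τ : Equiv.Perm (Fin r), Y r τ = 0 := by
  unfold Y
  rw [Finset.sum_comm]
  refine Finset.sum_eq_zero fun l _ => ?_
  rw [← Finset.sum_mul, sum_perm_pr r l hr, zero_mul]

lemma sum_Y_sq (r : ℕ) (hr : 2 ≤ r) :
    ∑ τ : Equiv.Perm (Fin r), (Y r τ) ^ 2
      = (Fintype.card (Equiv.Perm (Fin r)) : ℝ) * (vr r) ^ 2 / ((r : ℝ) - 1) := by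
  have hr0 : (r : ℝ) ≠ 0 := by positivity
  have hr2 : (2:ℝ) ≤ (r:ℝ) := by exact_mod_cast hr
  have hr1 : (r : ℝ) - 1 ≠ 0 := by nlinarith
  have expand : ∀ τ : Equiv.Perm (Fin r), (Y r τ) ^ 2
      = ∑ l, ∑ l', (pr r l * pr r l') * (pr r (τ l) * pr r (τ l')) := by
    intro τ
    rw [sq, Y, Finset.sum_mul_sum]
    refine Finset.sum_congr rfl fun l _ => Finset.sum_congr rfl fun l' _ => by ring
  rw [Finset.sum_congr rfl fun τ _ => expand τ, Finset.sum_comm]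
  have swap2 : ∀ l : Fin r, ∑ τ : Equiv.Perm (Fin r),
      ∑ l', (pr r l * pr r l') * (pr r (τ l) * pr r (τ l'))
      = ∑ l', (pr r l * pr r l') * D r l l' := by
    intro l
    rw [Finset.sum_comm]
    refine Finset.sum_congr rfl fun l' _ => ?_
    rw [D, Finset.mul_sum]
  rw [Finset.sum_congr rfl fun l _ => swap2 l]
  set N := (Fintype.card (Equiv.Perm (Fin r)) : ℝ) with hN
  have inner : ∀ l : Fin r, ∑ l', (pr r l * pr r l') * D r l l'
      = (pr r l) ^ 2 * (N * vr r / r + N * vr r / (r * ((r:ℝ) - 1))) := by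
    intro l
    rw [← Finset.add_sum_erase _ _ (Finset.mem_univ l)]
    have h1 : ∑ l' ∈ univ.erase l, (pr r l * pr r l') * D r l l'
        = (pr r l * -(N * vr r / (r * ((r:ℝ)-1)))) * ∑ l' ∈ univ.erase l, pr r l' := by
      rw [Finset.mul_sum]
      refine Finset.sum_congr rfl fun l' hl' => ?_
      rw [D_offdiag r hr (Finset.ne_of_mem_erase hl')]
      ring
    have h2 : ∑ l' ∈ univ.erase l, pr r l' = -pr r l := by
      have := Finset.add_sum_erase Finset.univ (pr r) (Finset.mem_univ l)
      rw [sum_pr r] at this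
      linarith
    rw [h1, h2, D_diag r hr l]
    ring
  rw [Finset.sum_congr rfl fun l _ => inner l, ← Finset.sum_mul, ← vr]
  field_simp
  ring



variable {n r : ℕ}
noncomputable def avG (r : ℕ) (f : Equiv.Perm (Fin r) → ℝ) : ℝ :=
  (∑ τ, f τ) / (Fintype.card (Equiv.Perm (Fin r)))

noncomputable def avO (n r : ℕ) (f : (Fin n → Equiv.Perm (Fin r)) → ℝ) : ℝ :=
  (∑ ω, f ω) / (Fintype.card (Fin n → Equiv.Perm (Fin r)))

variable {n r : ℕ}

lemma cardG_ne : (Fintype.card (Equiv.Perm (Fin r)) : ℝ) ≠ 0 := by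
  simp [Fintype.card_ne_zero]

lemma cardO_ne : (Fintype.card (Fin n → Equiv.Perm (Fin r)) : ℝ) ≠ 0 := by
  simp [Fintype.card_ne_zero]

lemma avO_split (a : Fin n) (f : Equiv.Perm (Fin r) → ℝ)
    (g : (Fin n → Equiv.Perm (Fin r)) → ℝ)
    (hg : ∀ ω x, g (Function.update ω a x) = g ω) :
    avO n r (fun ω => f (ω a) * g ω) = avG r f * avO n r g := by
  classical
  set e := Equiv.funSplitAt a (Equiv.Perm (Fin r)) with he
  have key : ∀ (x : Equiv.Perm (Fin r)) ψ,
      e.symm (x, ψ) = Function.update (e.symm (1, ψ)) a x := by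
    intro x ψ
    funext j
    by_cases h : j = a
    · subst h
      simp [he, Equiv.funSplitAt_symm_apply]
    · simp [he, Equiv.funSplitAt_symm_apply, h, Function.update_of_ne h]
  have hval : ∀ (x : Equiv.Perm (Fin r)) ψ, (e.symm (x, ψ)) a = x := by
    intro x ψ
    simp [he, Equiv.funSplitAt_symm_apply]
  have hgval : ∀ (x : Equiv.Perm (Fin r)) ψ, g (e.symm (x, ψ)) = g (e.symm (1, ψ)) := by
    intro x ψ
    rw [key x ψ, hg]
  have h1 : ∀ (F : (Fin n → Equiv.Perm (Fin r)) → ℝ),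
      ∑ ω, F ω = ∑ x, ∑ ψ, F (e.symm (x, ψ)) := by
    intro F
    rw [← Equiv.sum_comp e.symm F, Fintype.sum_prod_type]
  have hL : ∑ ω, f (ω a) * g ω
      = (∑ x, f x) * ∑ ψ, g (e.symm (1, ψ)) := by
    rw [h1 (fun ω => f (ω a) * g ω)]
    rw [Finset.sum_mul]
    refine Finset.sum_congr rfl fun x _ => ?_
    rw [Finset.mul_sum]
    refine Finset.sum_congr rfl fun ψ _ => ?_
    rw [hval, hgval]
  have hR : ∑ ω, g ω
      = (Fintype.card (Equiv.Perm (Fin r)) : ℝ) * ∑ ψ, g (e.symm (1, ψ)) := by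
    rw [h1 g]
    rw [Finset.sum_congr rfl fun x _ => Finset.sum_congr rfl fun ψ _ => hgval x ψ]
    rw [Finset.sum_const, Finset.card_univ, nsmul_eq_mul]
  unfold avO avG
  rw [hL, hR]
  field_simp

lemma avO_const (c : ℝ) : avO n r (fun _ => c) = c := by
  unfold avO
  rw [Finset.sum_const, Finset.card_univ, nsmul_eq_mul]
  field_simp

lemma avO_add (f g : (Fin n → Equiv.Perm (Fin r)) → ℝ) :
    avO n r (fun ω => f ω + g ω) = avO n r f + avO n r g := by
  unfold avO; rw [Finset.sum_add_distrib, add_div]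

lemma avO_smul (c : ℝ) (f : (Fin n → Equiv.Perm (Fin r)) → ℝ) :
    avO n r (fun ω => c * f ω) = c * avO n r f := by
  unfold avO; rw [← Finset.mul_sum, mul_div_assoc]


noncomputable def Z (n r : ℕ) (s : Finset (Fin n)) (ω : Fin n → Equiv.Perm (Fin r)) : ℝ :=
  ∑ i ∈ s, Y r (ω i)

noncomputable def Mo (r : ℕ) (j : ℕ) : ℝ := avG r (fun τ => (Y r τ) ^ j)

lemma Z_update {s : Finset (Fin n)} {a : Fin n} (ha : a ∉ s)
    (ω : Fin n → Equiv.Perm (Fin r)) (x : Equiv.Perm (Fin r)) :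
    Z n r s (Function.update ω a x) = Z n r s ω := by
  unfold Z
  refine Finset.sum_congr rfl fun i hi => ?_
  have hia : i ≠ a := by rintro rfl; exact ha hi
  rw [Function.update_of_ne hia]

lemma avO_Y_pow (a : Fin n) (j : ℕ) :
    avO n r (fun ω => (Y r (ω a)) ^ j) = Mo r j := by
  have h := avO_split a (fun τ => (Y r τ) ^ j) (fun _ => 1) (fun _ _ => rfl)
  simpa [avO_const, Mo] using h

lemma avO_Y_pow_mul {s : Finset (Fin n)} {a : Fin n} (ha : a ∉ s) (j k : ℕ) :
    avO n r (fun ω => (Y r (ω a)) ^ j * (Z n r s ω) ^ k)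
      = Mo r j * avO n r (fun ω => (Z n r s ω) ^ k) :=
  avO_split a (fun τ => (Y r τ) ^ j) (fun ω => (Z n r s ω) ^ k)
    (fun ω x => by simp only [Z_update ha])

lemma Z_moments (hM1 : Mo r 1 = 0) (s : Finset (Fin n)) :
    avO n r (fun ω => (Z n r s ω) ^ 1) = 0 ∧
    avO n r (fun ω => (Z n r s ω) ^ 2) = s.card * Mo r 2 ∧
    avO n r (fun ω => (Z n r s ω) ^ 3) = s.card * Mo r 3 ∧
    avO n r (fun ω => (Z n r s ω) ^ 4)
      = s.card * Mo r 4 + 3 * s.card * ((s.card : ℝ) - 1) * (Mo r 2) ^ 2 := by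
  classical
  induction s using Finset.induction_on with
  | empty =>
      have hz : ∀ k, k ≠ 0 → avO n r (fun ω => (Z n r (∅ : Finset (Fin n)) ω) ^ k) = 0 := by
        intro k hk
        have : (fun ω : Fin n → Equiv.Perm (Fin r) => (Z n r (∅ : Finset (Fin n)) ω) ^ k)
            = fun _ => 0 := by
          funext ω; simp [Z, zero_pow hk]
        rw [this, avO_const]
      refine ⟨hz 1 one_ne_zero, ?_, ?_, ?_⟩ <;>
        simp [hz 2 two_ne_zero, hz 3 three_ne_zero, hz 4 four_ne_zero]
  | @insert a s ha ih =>
      obtain ⟨ih1, ih2, ih3, ih4⟩ := ih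
      have hZ : ∀ ω : Fin n → Equiv.Perm (Fin r),
          Z n r (insert a s) ω = Y r (ω a) + Z n r s ω := fun ω => Finset.sum_insert ha
      have hcard : ((insert a s).card : ℝ) = (s.card : ℝ) + 1 := by
        rw [Finset.card_insert_of_notMem ha]; push_cast; ring
      set c := (s.card : ℝ)
      have hM0 : Mo r 0 = 1 := by
        have h := avO_Y_pow (n := n) (r := r) a 0
        rw [← h]
        simpa using avO_const (n := n) (r := r) 1
      have hZ0 : avO n r (fun ω => (Z n r s ω) ^ 0) = 1 := by
        simpa using avO_const (n := n) (r := r) 1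
      -- power 1
      have e1 : avO n r (fun ω => (Z n r (insert a s) ω) ^ 1) = 0 := by
        have hf : (fun ω : Fin n → Equiv.Perm (Fin r) => (Z n r (insert a s) ω) ^ 1)
            = fun ω => (Y r (ω a)) ^ 1 * (Z n r s ω) ^ 0
              + (Y r (ω a)) ^ 0 * (Z n r s ω) ^ 1 := by
          funext ω; rw [hZ ω]; ring
        rw [hf, avO_add, avO_Y_pow_mul ha, avO_Y_pow_mul ha, hM1, hZ0, ih1, hM0]
        ring
      have e2 : avO n r (fun ω => (Z n r (insert a s) ω) ^ 2) = (c + 1) * Mo r 2 := by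
        have hf : (fun ω : Fin n → Equiv.Perm (Fin r) => (Z n r (insert a s) ω) ^ 2)
            = fun ω => (Y r (ω a)) ^ 2 * (Z n r s ω) ^ 0
              + (2 * ((Y r (ω a)) ^ 1 * (Z n r s ω) ^ 1)
              + (Y r (ω a)) ^ 0 * (Z n r s ω) ^ 2) := by
          funext ω; rw [hZ ω]; ring
        rw [hf, avO_add, avO_add, avO_smul, avO_Y_pow_mul ha, avO_Y_pow_mul ha,
          avO_Y_pow_mul ha, hM1, hM0, hZ0, ih1, ih2]
        ring
      have e3 : avO n r (fun ω => (Z n r (insert a s) ω) ^ 3) = (c + 1) * Mo r 3 := by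
        have hf : (fun ω : Fin n → Equiv.Perm (Fin r) => (Z n r (insert a s) ω) ^ 3)
            = fun ω => (Y r (ω a)) ^ 3 * (Z n r s ω) ^ 0
              + (3 * ((Y r (ω a)) ^ 2 * (Z n r s ω) ^ 1)
              + (3 * ((Y r (ω a)) ^ 1 * (Z n r s ω) ^ 2)
              + (Y r (ω a)) ^ 0 * (Z n r s ω) ^ 3)) := by
          funext ω; rw [hZ ω]; ring
        rw [hf, avO_add, avO_add, avO_add, avO_smul, avO_smul, avO_Y_pow_mul ha,
          avO_Y_pow_mul ha, avO_Y_pow_mul ha, avO_Y_pow_mul ha, hM1, hM0, hZ0, ih1, ih2, ih3]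
        ring
      have e4 : avO n r (fun ω => (Z n r (insert a s) ω) ^ 4)
          = (c + 1) * Mo r 4 + 3 * (c + 1) * ((c + 1) - 1) * (Mo r 2) ^ 2 := by
        have hf : (fun ω : Fin n → Equiv.Perm (Fin r) => (Z n r (insert a s) ω) ^ 4)
            = fun ω => (Y r (ω a)) ^ 4 * (Z n r s ω) ^ 0
              + (4 * ((Y r (ω a)) ^ 3 * (Z n r s ω) ^ 1)
              + (6 * ((Y r (ω a)) ^ 2 * (Z n r s ω) ^ 2)
              + (4 * ((Y r (ω a)) ^ 1 * (Z n r s ω) ^ 3)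
              + (Y r (ω a)) ^ 0 * (Z n r s ω) ^ 4))) := by
          funext ω; rw [hZ ω]; ring
        rw [hf, avO_add, avO_add, avO_add, avO_add, avO_smul, avO_smul, avO_smul,
          avO_Y_pow_mul ha, avO_Y_pow_mul ha, avO_Y_pow_mul ha, avO_Y_pow_mul ha,
          avO_Y_pow_mul ha, hM1, hM0, hZ0, ih1, ih2, ih3, ih4]
        ring
      rw [e1, e2, e3, e4, hcard]
      refine ⟨rfl, rfl, rfl, rfl⟩
lemma cardG_pos : (0:ℝ) < (Fintype.card (Equiv.Perm (Fin r)) : ℝ) := by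
  exact_mod_cast Fintype.card_pos

lemma Mo_one (hr : 2 ≤ r) : Mo r 1 = 0 := by
  unfold Mo avG
  simp only [pow_one]
  rw [sum_Y r hr, zero_div]

lemma Mo_two (hr : 2 ≤ r) : Mo r 2 = (vr r) ^ 2 / ((r : ℝ) - 1) := by
  unfold Mo avG
  have hr1 : (r:ℝ) - 1 ≠ 0 := by
    have : (2:ℝ) ≤ (r:ℝ) := by exact_mod_cast hr
    nlinarith
  rw [sum_Y_sq r hr]
  field_simp

lemma Mo_two_nonneg : 0 ≤ Mo r 2 := by
  unfold Mo avG
  exact div_nonneg (Finset.sum_nonneg fun τ _ => sq_nonneg _) cardG_pos.le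

lemma Mo_three_le : Mo r 3 ≤ vr r * Mo r 2 := by
  unfold Mo avG
  have h : ∑ τ : Equiv.Perm (Fin r), (Y r τ) ^ 3
      ≤ ∑ τ : Equiv.Perm (Fin r), vr r * (Y r τ) ^ 2 :=
    Finset.sum_le_sum fun τ _ => by
      nlinarith [mul_nonneg (sq_nonneg (Y r τ))
        (sub_nonneg.2 (le_trans (le_abs_self (Y r τ)) (abs_Y_le r τ)))]
  calc (∑ τ : Equiv.Perm (Fin r), (Y r τ) ^ 3) / (Fintype.card (Equiv.Perm (Fin r)) : ℝ)
      ≤ (∑ τ : Equiv.Perm (Fin r), vr r * (Y r τ) ^ 2)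
          / (Fintype.card (Equiv.Perm (Fin r)) : ℝ) := by
        apply div_le_div_of_nonneg_right h cardG_pos.le
    _ = vr r * ((∑ τ : Equiv.Perm (Fin r), (Y r τ) ^ 2)
          / (Fintype.card (Equiv.Perm (Fin r)) : ℝ)) := by
        rw [← Finset.mul_sum, mul_div_assoc]

lemma Mo_four_le : Mo r 4 ≤ (vr r) ^ 2 * Mo r 2 := by
  unfold Mo avG
  have h : ∑ τ : Equiv.Perm (Fin r), (Y r τ) ^ 4
      ≤ ∑ τ : Equiv.Perm (Fin r), (vr r) ^ 2 * (Y r τ) ^ 2 :=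
    Finset.sum_le_sum fun τ _ => by
      nlinarith [mul_nonneg (sq_nonneg (Y r τ)) (sub_nonneg.2 (Y_sq_le r τ))]
  calc (∑ τ : Equiv.Perm (Fin r), (Y r τ) ^ 4) / (Fintype.card (Equiv.Perm (Fin r)) : ℝ)
      ≤ (∑ τ : Equiv.Perm (Fin r), (vr r) ^ 2 * (Y r τ) ^ 2)
          / (Fintype.card (Equiv.Perm (Fin r)) : ℝ) := by
        apply div_le_div_of_nonneg_right h cardG_pos.le
    _ = (vr r) ^ 2 * ((∑ τ : Equiv.Perm (Fin r), (Y r τ) ^ 2)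
          / (Fintype.card (Equiv.Perm (Fin r)) : ℝ)) := by
        rw [← Finset.mul_sum, mul_div_assoc]


instance (r : ℕ) : MeasurableSingletonClass (Equiv.Perm (Fin r)) :=
  ⟨fun _ => MeasurableSpace.measurableSet_top⟩

lemma integral_eq_avO (f : (Fin n → Equiv.Perm (Fin r)) → ℝ) :
    ∫ ω, f ω ∂(friedmanMeasure n r) = avO n r f := by
  rw [friedmanMeasure, MeasureTheory.integral_fintype (Integrable.of_finite)]
  have h : ∀ ω : Fin n → Equiv.Perm (Fin r),
      ((PMF.uniformOfFintype (Fin n → Equiv.Perm (Fin r))).toMeasure {ω}).toReal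
        = (Fintype.card (Fin n → Equiv.Perm (Fin r)) : ℝ)⁻¹ := by
    intro ω
    rw [PMF.toMeasure_apply_singleton _ _ (measurableSet_singleton ω),
      PMF.uniformOfFintype_apply]
    simp
  simp only [Measure.real_def, h, smul_eq_mul, avO]
  rw [← Finset.mul_sum, inv_mul_eq_div]

/-- the change-of-variables bijection -/
def Ψ (n r : ℕ) (m : Fin n) :
    (Fin n → Equiv.Perm (Fin r)) ≃ (Fin n → Equiv.Perm (Fin r)) where
  toFun ω i := if i = m then ω m else ω i * ω m
  invFun ω i := if i = m then ω m else ω i * (ω m)⁻¹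
  left_inv ω := by
    funext i
    by_cases h : i = m <;> simp [h]
  right_inv ω := by
    funext i
    by_cases h : i = m <;> simp [h]

lemma rho_eq (i : Fin n) (j : Fin r) (ω : Fin n → Equiv.Perm (Fin r)) :
    rho n r i j ω = pr r (ω i j) := rfl

lemma pointwise (m : Fin n) (ω : Fin n → Equiv.Perm (Fin r)) :
    ∑ l, Sstat n r l ((Ψ n r m) ω) * rho n r m l ((Ψ n r m) ω)
      = Real.sqrt 12 / Real.sqrt ((r : ℝ) * ((r : ℝ) + 1) * (n : ℝ))
        * (vr r + Z n r (Finset.univ.erase m) ω) := by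
  set ω' := (Ψ n r m) ω with hω'
  have hm : ω' m = ω m := by simp [hω', Ψ]
  have hne : ∀ i : Fin n, i ≠ m → ω' i = ω i * ω m := by
    intro i hi; simp [hω', Ψ, hi]
  set cst := Real.sqrt 12 / Real.sqrt ((r : ℝ) * ((r : ℝ) + 1) * (n : ℝ)) with hcst
  have step1 : ∑ l, Sstat n r l ω' * rho n r m l ω'
      = cst * ∑ i, ∑ l, pr r (ω' i l) * pr r (ω' m l) := by
    calc ∑ l, Sstat n r l ω' * rho n r m l ω'
        = ∑ l, cst * ∑ i, pr r (ω' i l) * pr r (ω' m l) := by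
          refine Finset.sum_congr rfl fun l _ => ?_
          rw [Sstat]
          simp only [rho_eq, ← hcst]
          rw [mul_assoc, Finset.sum_mul]
      _ = cst * ∑ l, ∑ i, pr r (ω' i l) * pr r (ω' m l) := by rw [Finset.mul_sum]
      _ = cst * ∑ i, ∑ l, pr r (ω' i l) * pr r (ω' m l) := by rw [Finset.sum_comm]
  rw [step1, hm]
  congr 1
  have hmterm : ∑ l, pr r (ω' m l) * pr r (ω m l) = vr r := by
    rw [hm]
    have h2 := sum_pr_sq_comp (ω m)
    simpa [sq] using h2
  have hoterm : ∀ i : Fin n, i ≠ m →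
      ∑ l, pr r (ω' i l) * pr r (ω m l) = Y r (ω i) := by
    intro i hi
    rw [hne i hi]
    have := Equiv.sum_comp (ω m) (fun k => pr r ((ω i) k) * pr r k)
    rw [Y, ← this]
    exact Finset.sum_congr rfl fun l _ => by simp [Equiv.Perm.mul_apply]
  rw [← Finset.add_sum_erase _ _ (Finset.mem_univ m), hmterm]
  congr 1
  exact Finset.sum_congr rfl fun i hi => hoterm i (Finset.ne_of_mem_erase hi)

lemma avO_comp_Ψ (m : Fin n) (f : (Fin n → Equiv.Perm (Fin r)) → ℝ) :
    avO n r (fun ω => f ((Ψ n r m) ω)) = avO n r f := by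
  unfold avO
  rw [Equiv.sum_comp (Ψ n r m) f]



lemma final_ineq (x y : ℝ) (hx : 2 ≤ x) (hy : 2 ≤ y) :
    144 / (y * (y + 1) * x) ^ 2 *
      ((y * (y ^ 2 - 1) / 12) ^ 4 *
        (1 + 11 * (x - 1) / (y - 1) + 3 * (x - 1) * (x - 2) / (y - 1) ^ 2))
      ≤ (7 / 48 + y ^ 2 / (36 * x ^ 2) + 1 / (5 * x)) * y ^ 6 := by
  have hx0 : (0:ℝ) < x := by linarith
  have hy0 : (0:ℝ) < y := by linarith
  have hy1 : (0:ℝ) < y - 1 := by linarith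
  have hx1 : (0:ℝ) ≤ x - 1 := by linarith
  have hP0 : (0:ℝ) ≤ y ^ 2 * (y + 1) ^ 2 * (y - 1) ^ 2 := by positivity
  have hP : y ^ 2 * (y + 1) ^ 2 * (y - 1) ^ 2 ≤ y ^ 6 := by
    nlinarith [mul_nonneg (sq_nonneg y) (by nlinarith : (0:ℝ) ≤ 2 * y ^ 2 - 1)]
  have key : 5 * (y ^ 2 * (y + 1) ^ 2 * (y - 1) ^ 2) *
      ((y - 1) ^ 2 + 11 * (x - 1) * (y - 1) + 3 * (x - 1) * (x - 2))
      ≤ 105 * x ^ 2 * y ^ 6 + 20 * y ^ 8 + 144 * x * y ^ 6 := by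
    have s1 : 5 * (y ^ 2 * (y + 1) ^ 2 * (y - 1) ^ 2) * (y - 1) ^ 2 ≤ 5 * y ^ 8 := by
      nlinarith [mul_le_mul_of_nonneg_left hP (by positivity : (0:ℝ) ≤ 5 * (y-1)^2),
        sq_nonneg (y - 1), mul_nonneg (mul_nonneg (sq_nonneg y) (sq_nonneg (y+1)))
          (by nlinarith : (0:ℝ) ≤ 2 * (y-1) ^ 2 * y ^2 - (y-1)^4)]
    have s2a : (y + 1) ^ 2 * (y - 1) ^ 3 ≤ y ^ 5 := by nlinarith [sq_nonneg y, sq_nonneg (y-1)]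
    have s2 : 55 * (x - 1) * (y ^ 2 * (y + 1) ^ 2 * (y - 1) ^ 2) * (y - 1)
        ≤ 90 * x ^ 2 * y ^ 6 + 15 * y ^ 8 := by
      have t1 : 55 * (x - 1) * (y ^ 2 * (y + 1) ^ 2 * (y - 1) ^ 2) * (y - 1)
          = 55 * (x - 1) * y ^ 2 * ((y + 1) ^ 2 * (y - 1) ^ 3) := by ring
      have t2 : 55 * (x - 1) * y ^ 2 * ((y + 1) ^ 2 * (y - 1) ^ 3)
          ≤ 55 * (x - 1) * y ^ 2 * y ^ 5 :=
        mul_le_mul_of_nonneg_left s2a (by positivity)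
      have t3 : 55 * (x - 1) * y ^ 2 * y ^ 5 ≤ 55 * x * y ^ 7 := by
        nlinarith [pow_pos hy0 7]
      have hAM : 55 * x * y ^ 7 ≤ 90 * x ^ 2 * y ^ 6 + 15 * y ^ 8 := by
        nlinarith [mul_nonneg (sq_nonneg (3 * x - y)) (pow_pos hy0 6).le,
          mul_nonneg (sq_nonneg (x - y)) (pow_pos hy0 6).le,
          mul_nonneg (mul_nonneg hx0.le hy0.le) (pow_pos hy0 6).le]
      linarith
    have s3 : 15 * (x - 1) * (x - 2) * (y ^ 2 * (y + 1) ^ 2 * (y - 1) ^ 2)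
        ≤ 15 * x ^ 2 * y ^ 6 := by
      have hx12 : (x - 1) * (x - 2) ≤ x ^ 2 := by nlinarith
      have u1 : 15 * (x - 1) * (x - 2) * (y ^ 2 * (y + 1) ^ 2 * (y - 1) ^ 2)
          ≤ 15 * x ^ 2 * (y ^ 2 * (y + 1) ^ 2 * (y - 1) ^ 2) := by
        have := mul_le_mul_of_nonneg_right (by linarith : 15 * ((x-1)*(x-2)) ≤ 15 * x ^ 2) hP0
        linarith [this]
      have u2 : 15 * x ^ 2 * (y ^ 2 * (y + 1) ^ 2 * (y - 1) ^ 2) ≤ 15 * x ^ 2 * y ^ 6 :=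
        mul_le_mul_of_nonneg_left hP (by positivity)
      linarith
    nlinarith [s1, s2, s3, mul_nonneg (mul_nonneg hx1 (by linarith : (0:ℝ) ≤ y - 1)) hP0]
  rw [div_mul_eq_mul_div, div_le_iff₀ (by positivity)]
  have expand : (7 / 48 + y ^ 2 / (36 * x ^ 2) + 1 / (5 * x)) * y ^ 6 * (y * (y + 1) * x) ^ 2
      - 144 * ((y * (y ^ 2 - 1) / 12) ^ 4 *
        (1 + 11 * (x - 1) / (y - 1) + 3 * (x - 1) * (x - 2) / (y - 1) ^ 2))
      = (105 * x ^ 2 * y ^ 6 + 20 * y ^ 8 + 144 * x * y ^ 6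
          - 5 * (y ^ 2 * (y + 1) ^ 2 * (y - 1) ^ 2) *
            ((y - 1) ^ 2 + 11 * (x - 1) * (y - 1) + 3 * (x - 1) * (x - 2)))
        * (y ^ 2 * (y + 1) ^ 2) / 720 := by
    field_simp
    ring
  have pos : (0:ℝ) ≤ (105 * x ^ 2 * y ^ 6 + 20 * y ^ 8 + 144 * x * y ^ 6
          - 5 * (y ^ 2 * (y + 1) ^ 2 * (y - 1) ^ 2) *
            ((y - 1) ^ 2 + 11 * (x - 1) * (y - 1) + 3 * (x - 1) * (x - 2)))
        * (y ^ 2 * (y + 1) ^ 2) / 720 := by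
    apply div_nonneg _ (by norm_num)
    exact mul_nonneg (by linarith) (by positivity)
  linarith [expand, pos]

end TmAux

set_option maxHeartbeats 2000000 in
/-- **Lemma 3.3, (3.3) (Gaunt–Reinert).** For `n, r ≥ 2` and `T_m = ∑_{l=1}^r S_l ρ_m(l)`,
`E[T_m⁴] ≤ (7/48 + r²/(36n²) + 1/(5n)) r⁶`. -/
theorem Tm_fourth_moment (n r : ℕ) (hn : 2 ≤ n) (hr : 2 ≤ r) (m : Fin n) :
    ∫ ω, (∑ l, Sstat n r l ω * rho n r m l ω) ^ 4 ∂(friedmanMeasure n r)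
      ≤ (7 / 48 + (r : ℝ) ^ 2 / (36 * (n : ℝ) ^ 2) + 1 / (5 * (n : ℝ))) * (r : ℝ) ^ 6 := by
  classical
  have hr2 : (2:ℝ) ≤ (r:ℝ) := by exact_mod_cast hr
  have hn2 : (2:ℝ) ≤ (n:ℝ) := by exact_mod_cast hn
  set s : Finset (Fin n) := Finset.univ.erase m with hs
  set cst := Real.sqrt 12 / Real.sqrt ((r : ℝ) * ((r : ℝ) + 1) * (n : ℝ)) with hcst
  rw [TmAux.integral_eq_avO]
  have h1 := TmAux.avO_comp_Ψ (n := n) (r := r) m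
      (fun ω => (∑ l, Sstat n r l ω * rho n r m l ω) ^ 4)
  rw [← h1]
  have h2 : (fun ω => (fun ω => (∑ l, Sstat n r l ω * rho n r m l ω) ^ 4) ((TmAux.Ψ n r m) ω))
      = fun ω => (cst * (TmAux.vr r + TmAux.Z n r s ω)) ^ 4 := by
    funext ω
    simp only []
    rw [TmAux.pointwise m ω]
  rw [h2]
  obtain ⟨e1, e2, e3, e4⟩ := TmAux.Z_moments (TmAux.Mo_one hr) s
  have hZ0 : TmAux.avO n r (fun ω => (TmAux.Z n r s ω) ^ 0) = 1 := by
    simpa using TmAux.avO_const (n := n) (r := r) 1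
  have hf : (fun ω => (cst * (TmAux.vr r + TmAux.Z n r s ω)) ^ 4)
      = fun ω => (cst ^ 4 * TmAux.vr r ^ 4) * (TmAux.Z n r s ω) ^ 0
        + ((4 * cst ^ 4 * TmAux.vr r ^ 3) * (TmAux.Z n r s ω) ^ 1
        + ((6 * cst ^ 4 * TmAux.vr r ^ 2) * (TmAux.Z n r s ω) ^ 2
        + ((4 * cst ^ 4 * TmAux.vr r) * (TmAux.Z n r s ω) ^ 3
        + cst ^ 4 * (TmAux.Z n r s ω) ^ 4))) := by
    funext ω; ring
  rw [hf, TmAux.avO_add, TmAux.avO_add, TmAux.avO_add, TmAux.avO_add,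
    TmAux.avO_smul, TmAux.avO_smul, TmAux.avO_smul, TmAux.avO_smul, TmAux.avO_smul,
    hZ0, e1, e2, e3, e4]
  -- facts
  have hcard : ((s.card : ℕ) : ℝ) = (n:ℝ) - 1 := by
    rw [hs, Finset.card_erase_of_mem (Finset.mem_univ m), Finset.card_univ, Fintype.card_fin]
    have h1n : 1 ≤ n := by omega
    push_cast [Nat.cast_sub h1n]
    ring
  have hKpos : (0:ℝ) < (r:ℝ) * ((r:ℝ) + 1) * (n:ℝ) := by
    have h1 : (0:ℝ) < (r:ℝ) := by linarith
    have h2 : (0:ℝ) < (n:ℝ) := by linarith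
    have h3 : (0:ℝ) < (r:ℝ) + 1 := by linarith
    exact mul_pos (mul_pos h1 h3) h2
  have hcst2 : cst ^ 2 = 12 / ((r:ℝ) * ((r:ℝ) + 1) * (n:ℝ)) := by
    rw [hcst, div_pow, Real.sq_sqrt (by norm_num : (0:ℝ) ≤ 12), Real.sq_sqrt hKpos.le]
  have hcst4 : cst ^ 4 = 144 / ((r:ℝ) * ((r:ℝ) + 1) * (n:ℝ)) ^ 2 := by
    have h44 : cst ^ 4 = (cst ^ 2) ^ 2 := by ring
    rw [h44, hcst2, div_pow]
    norm_num
  have hvr : TmAux.vr r = (r:ℝ) * ((r:ℝ) ^ 2 - 1) / 12 := TmAux.vr_eq r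
  have hMo2 : TmAux.Mo r 2 = (TmAux.vr r) ^ 2 / ((r:ℝ) - 1) := TmAux.Mo_two hr
  have hvrnn : (0:ℝ) ≤ TmAux.vr r := TmAux.vr_nonneg r
  have hcnn : (0:ℝ) ≤ ((s.card : ℕ) : ℝ) := by rw [hcard]; linarith
  have hcst4nn : (0:ℝ) ≤ cst ^ 4 := by positivity
  -- replace Mo 3 and Mo 4 by their bounds
  have t3 : (4 * cst ^ 4 * TmAux.vr r) * ((s.card : ℝ) * TmAux.Mo r 3)
      ≤ (4 * cst ^ 4 * TmAux.vr r) * ((s.card : ℝ) * (TmAux.vr r * TmAux.Mo r 2)) := by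
    apply mul_le_mul_of_nonneg_left _ (by positivity)
    exact mul_le_mul_of_nonneg_left (TmAux.Mo_three_le (r := r)) hcnn
  have t4 : cst ^ 4 * ((s.card : ℝ) * TmAux.Mo r 4
        + 3 * (s.card : ℝ) * ((s.card : ℝ) - 1) * (TmAux.Mo r 2) ^ 2)
      ≤ cst ^ 4 * ((s.card : ℝ) * ((TmAux.vr r) ^ 2 * TmAux.Mo r 2)
        + 3 * (s.card : ℝ) * ((s.card : ℝ) - 1) * (TmAux.Mo r 2) ^ 2) := by
    apply mul_le_mul_of_nonneg_left _ hcst4nn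
    have := mul_le_mul_of_nonneg_left (TmAux.Mo_four_le (r := r)) hcnn
    linarith
  have main := TmAux.final_ineq (n:ℝ) (r:ℝ) hn2 hr2
  have hE2 : cst ^ 4 * TmAux.vr r ^ 4 * 1
      + (4 * cst ^ 4 * TmAux.vr r ^ 3 * 0
      + (6 * cst ^ 4 * TmAux.vr r ^ 2 * ((s.card : ℝ) * TmAux.Mo r 2)
      + ((4 * cst ^ 4 * TmAux.vr r) * ((s.card : ℝ) * (TmAux.vr r * TmAux.Mo r 2))
      + cst ^ 4 * ((s.card : ℝ) * ((TmAux.vr r) ^ 2 * TmAux.Mo r 2)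
        + 3 * (s.card : ℝ) * ((s.card : ℝ) - 1) * (TmAux.Mo r 2) ^ 2))))
      = 144 / ((r:ℝ) * ((r:ℝ) + 1) * (n:ℝ)) ^ 2 *
        (((r:ℝ) * ((r:ℝ) ^ 2 - 1) / 12) ^ 4 *
          (1 + 11 * ((n:ℝ) - 1) / ((r:ℝ) - 1)
            + 3 * ((n:ℝ) - 1) * ((n:ℝ) - 2) / ((r:ℝ) - 1) ^ 2)) := by
    rw [hcst4, hMo2, hvr, hcard]
    have hr1 : (r:ℝ) - 1 ≠ 0 := by nlinarith
    field_simp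
    ring
  linarith [t3, t4, hE2, main]
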